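/- Fix $\theta \in (0, \pi]$ and $\tau_1 \geq 1$. The function $G(\tau_2) = 2\operatorname{arth}\sqrt{\frac{\theta^2 + (\tau_1-\tau_2)^2}{\theta^2 + (\tau_1+\tau_2)^2}} - \frac{\theta}{\tau_1} - \log\tau_1 + \log\tau_2$ is strictly increasing in $\tau_2$ on $[1, \tau_1]$. -/

import Mathlib

open Real

/-- The inverse hyperbolic tangent, `arth t = (1/2) log ((1+t)/(1-t))`. -/
noncomputable def arth (t : ℝ) : ℝ := Real.log ((1 + t) / (1 - t)) / 2

lemma aux_key (θ τ₁ t : ℝ) (hθ : 0 < θ) (ht : 0 < t) (h1 : 0 < τ₁) :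
    2 * arth (Real.sqrt ((θ ^ 2 + (τ₁ - t) ^ 2) / (θ ^ 2 + (τ₁ + t) ^ 2)))
      - θ / τ₁ - Real.log τ₁ + Real.log t
    = 2 * Real.log (Real.sqrt (θ ^ 2 + (τ₁ - t) ^ 2) + Real.sqrt (θ ^ 2 + (τ₁ + t) ^ 2))
      - Real.log 4 - 2 * Real.log τ₁ - θ / τ₁ := by
  have hA : (0:ℝ) ≤ θ ^ 2 + (τ₁ - t) ^ 2 := by positivity
  have hB : (0:ℝ) < θ ^ 2 + (τ₁ + t) ^ 2 := by positivity
  set a := Real.sqrt (θ ^ 2 + (τ₁ - t) ^ 2) with ha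
  set b := Real.sqrt (θ ^ 2 + (τ₁ + t) ^ 2) with hb
  have ha0 : 0 ≤ a := Real.sqrt_nonneg _
  have hb0 : 0 < b := Real.sqrt_pos.2 hB
  have hab : a < b := by
    apply Real.sqrt_lt_sqrt hA
    nlinarith [mul_pos h1 ht]
  have hsq : Real.sqrt ((θ ^ 2 + (τ₁ - t) ^ 2) / (θ ^ 2 + (τ₁ + t) ^ 2)) = a / b := by
    rw [Real.sqrt_div hA]
  have ha2 : a ^ 2 = θ ^ 2 + (τ₁ - t) ^ 2 := Real.sq_sqrt hA
  have hb2 : b ^ 2 = θ ^ 2 + (τ₁ + t) ^ 2 := Real.sq_sqrt hB.le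
  have hdiff : b ^ 2 - a ^ 2 = 4 * τ₁ * t := by rw [ha2, hb2]; ring
  have hratio : (1 + a / b) / (1 - a / b) = (a + b) ^ 2 / (4 * τ₁ * t) := by
    have hden : 0 < 1 - a / b := by
      have : a / b < 1 := (div_lt_one hb0).2 hab
      linarith
    rw [div_eq_div_iff hden.ne' (by positivity : (4 * τ₁ * t : ℝ) ≠ 0), ← hdiff]
    field_simp
    ring
  have harth : arth (a / b) = Real.log ((a + b) ^ 2 / (4 * τ₁ * t)) / 2 := by
    rw [arth, hratio]
  have hab0 : 0 < a + b := by linarith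
  have hlog : Real.log ((a + b) ^ 2 / (4 * τ₁ * t))
      = 2 * Real.log (a + b) - (Real.log 4 + Real.log τ₁ + Real.log t) := by
    rw [Real.log_div (by positivity) (by positivity), Real.log_pow,
      Real.log_mul (by positivity) (by positivity),
      Real.log_mul (by norm_num) (by positivity)]
    push_cast; ring
  rw [hsq, harth, hlog]; ring

lemma aux_mono (θ τ₁ : ℝ) (hθ : 0 < θ) (hτ : 1 ≤ τ₁) :
    StrictMonoOn (fun t : ℝ =>
      Real.sqrt (θ ^ 2 + (τ₁ - t) ^ 2) + Real.sqrt (θ ^ 2 + (τ₁ + t) ^ 2))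
      (Set.Icc 1 τ₁) := by
  apply StrictMonoOn.mono (s := Set.Icc 1 τ₁) ?_ (le_refl _)
  apply strictMonoOn_of_deriv_pos (convex_Icc 1 τ₁)
  · fun_prop
  · intro x hx
    rw [interior_Icc] at hx
    obtain ⟨hx1, hx2⟩ := hx
    have hx0 : 0 < x := by linarith
    have hA : (0:ℝ) < θ ^ 2 + (τ₁ - x) ^ 2 := by positivity
    have hB : (0:ℝ) < θ ^ 2 + (τ₁ + x) ^ 2 := by positivity
    have d1 : HasDerivAt (fun t : ℝ => θ ^ 2 + (τ₁ - t) ^ 2) (2 * (τ₁ - x) * (-1)) x := by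
      have : HasDerivAt (fun t : ℝ => τ₁ - t) (-1) x := (hasDerivAt_id x).const_sub τ₁
      simpa using (this.pow 2).const_add (θ ^ 2)
    have d2 : HasDerivAt (fun t : ℝ => θ ^ 2 + (τ₁ + t) ^ 2) (2 * (τ₁ + x) * 1) x := by
      have : HasDerivAt (fun t : ℝ => τ₁ + t) 1 x := (hasDerivAt_id x).const_add τ₁
      simpa using (this.pow 2).const_add (θ ^ 2)
    have s1 : HasDerivAt (fun t : ℝ => Real.sqrt (θ ^ 2 + (τ₁ - t) ^ 2))
        ((2 * (τ₁ - x) * (-1)) / (2 * Real.sqrt (θ ^ 2 + (τ₁ - x) ^ 2))) x :=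
      d1.sqrt hA.ne'
    have s2 : HasDerivAt (fun t : ℝ => Real.sqrt (θ ^ 2 + (τ₁ + t) ^ 2))
        ((2 * (τ₁ + x) * 1) / (2 * Real.sqrt (θ ^ 2 + (τ₁ + x) ^ 2))) x :=
      d2.sqrt hB.ne'
    have hd : deriv (fun t : ℝ => Real.sqrt (θ ^ 2 + (τ₁ - t) ^ 2) + Real.sqrt (θ ^ 2 + (τ₁ + t) ^ 2)) x = _ :=
      (s1.add s2).deriv
    rw [hd]
    have hsA : 0 < Real.sqrt (θ ^ 2 + (τ₁ - x) ^ 2) := Real.sqrt_pos.2 hA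
    have hsB : 0 < Real.sqrt (θ ^ 2 + (τ₁ + x) ^ 2) := Real.sqrt_pos.2 hB
    rw [← sub_pos]
    have key : (τ₁ - x) * Real.sqrt (θ ^ 2 + (τ₁ + x) ^ 2)
        < (τ₁ + x) * Real.sqrt (θ ^ 2 + (τ₁ - x) ^ 2) := by
      have h1 : (τ₁ - x) * Real.sqrt (θ ^ 2 + (τ₁ + x) ^ 2)
          = Real.sqrt ((τ₁ - x) ^ 2 * (θ ^ 2 + (τ₁ + x) ^ 2)) := by
        rw [Real.sqrt_mul (by positivity), Real.sqrt_sq (by linarith)]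
      have h2 : (τ₁ + x) * Real.sqrt (θ ^ 2 + (τ₁ - x) ^ 2)
          = Real.sqrt ((τ₁ + x) ^ 2 * (θ ^ 2 + (τ₁ - x) ^ 2)) := by
        rw [Real.sqrt_mul (by positivity), Real.sqrt_sq (by linarith)]
      rw [h1, h2]
      apply Real.sqrt_lt_sqrt (by positivity)
      nlinarith [mul_pos (mul_pos (by linarith : (0:ℝ) < τ₁) hx0) (mul_pos hθ hθ)]
    have : (τ₁ - x) / Real.sqrt (θ ^ 2 + (τ₁ - x) ^ 2)
        < (τ₁ + x) / Real.sqrt (θ ^ 2 + (τ₁ + x) ^ 2) := by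
      rw [div_lt_div_iff₀ hsA hsB]
      nlinarith [key]
    calc (0:ℝ) < (τ₁ + x) / Real.sqrt (θ ^ 2 + (τ₁ + x) ^ 2)
          - (τ₁ - x) / Real.sqrt (θ ^ 2 + (τ₁ - x) ^ 2) := by linarith
      _ = 2 * (τ₁ + x) * 1 / (2 * Real.sqrt (θ ^ 2 + (τ₁ + x) ^ 2))
          + 2 * (τ₁ - x) * (-1) / (2 * Real.sqrt (θ ^ 2 + (τ₁ - x) ^ 2)) := by
        field_simp; ring
      _ = _ := by ring

theorem stmt_6 (θ τ₁ : ℝ) (hθ0 : 0 < θ) (hθπ : θ ≤ π) (hτ : 1 ≤ τ₁) :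
    StrictMonoOn (fun τ₂ : ℝ =>
      2 * arth (Real.sqrt ((θ ^ 2 + (τ₁ - τ₂) ^ 2) / (θ ^ 2 + (τ₁ + τ₂) ^ 2)))
        - θ / τ₁ - Real.log τ₁ + Real.log τ₂)
      (Set.Icc 1 τ₁) := by
  have h1 : (0:ℝ) < τ₁ := by linarith
  intro x hx y hy hxy
  have hx0 : (0:ℝ) < x := by linarith [hx.1]
  have hy0 : (0:ℝ) < y := by linarith [hy.1]
  simp only
  rw [aux_key θ τ₁ x hθ0 hx0 h1, aux_key θ τ₁ y hθ0 hy0 h1]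
  have hmono := aux_mono θ τ₁ hθ0 hτ hx hy hxy
  simp only at hmono
  have hpx : (0:ℝ) < Real.sqrt (θ ^ 2 + (τ₁ - x) ^ 2) + Real.sqrt (θ ^ 2 + (τ₁ + x) ^ 2) := by
    have : (0:ℝ) < Real.sqrt (θ ^ 2 + (τ₁ + x) ^ 2) := Real.sqrt_pos.2 (by positivity)
    have := Real.sqrt_nonneg (θ ^ 2 + (τ₁ - x) ^ 2)
    linarith
  have := Real.log_lt_log hpx hmono
  linarith
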